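/- Let G be a finite group with an abelian Sylow p-subgroup P of order divisible by p (i.e., P nontrivial). Then G contains a non-Schur p-element. -/

import Mathlib

/-- A non-Schur element of a group `G` is an element `x` with
`x ∉ [C_G(x), C_G(x)]`. -/
def IsNonSchur {G : Type*} [Group G] (x : G) : Prop :=
  x ∉ ⁅Subgroup.centralizer {x}, Subgroup.centralizer {x}⁆

/-- A `p`-element is an element of `p`-power order. -/
def IsPElement (p : ℕ) {G : Type*} [Group G] (x : G) : Prop :=
  ∃ n : ℕ, orderOf x = p ^ n

theorem nonSchur_of_abelian_sylow (p : ℕ) (hp : p.Prime) (G : Type*) [Group G] [Finite G]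
    (P : Sylow p G) (hab : IsMulCommutative ↥(P : Subgroup G)) (hdvd : p ∣ Nat.card ↥(P : Subgroup G)) :
    ∃ x : G, IsPElement p x ∧ IsNonSchur x := by
  haveI : Fact p.Prime := ⟨hp⟩
  obtain ⟨x0, hx0⟩ := exists_prime_orderOf_dvd_card' (G := ↥(P : Subgroup G)) p hdvd
  set x : G := (x0 : G) with hx
  have hordx : orderOf x = p := by
    rw [← hx0]; exact Subgroup.orderOf_coe x0
  set H : Subgroup G := Subgroup.centralizer {x} with hH
  have hPH : (P : Subgroup G) ≤ H := by
    intro g hg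
    rw [hH, Subgroup.mem_centralizer_singleton_iff]
    have := hab.1.1 ⟨g, hg⟩ x0
    exact congrArg Subtype.val this
  -- x viewed as an element of H; x is central in H
  have hxH : x ∈ H := by
    rw [hH, Subgroup.mem_centralizer_singleton_iff]
  set x' : H := ⟨x, hxH⟩ with hx'
  have hcentral : ∀ h : H, h * x' = x' * h := fun h =>
    Subtype.ext (Subgroup.mem_centralizer_singleton_iff.mp h.2)
  -- the Sylow subgroup of H
  set Q : Sylow p H := P.subtype hPH with hQ
  haveI := hab
  haveI : IsMulCommutative ↥(Q : Subgroup H) :=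
    show IsMulCommutative ↥((P : Subgroup G).subgroupOf H) from inferInstance
  haveI : (Q : Subgroup H).FiniteIndex := inferInstance
  letI : CommGroup ↥(Q : Subgroup H) :=
    { (inferInstance : Group ↥(Q : Subgroup H)) with mul_comm := fun a b => Std.Commutative.comm a b }
  -- transfer homomorphism H →* Q
  set T : H →* ↥(Q : Subgroup H) := MonoidHom.transfer (MonoidHom.id ↥(Q : Subgroup H)) with hT
  have key : ∀ (k : ℕ) (g₀ : H), g₀⁻¹ * x' ^ k * g₀ ∈ (Q : Subgroup H) →
      g₀⁻¹ * x' ^ k * g₀ = x' ^ k := by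
    intro k g₀ _
    have hck : Commute (x' ^ k) g₀ := (Commute.symm (show Commute g₀ x' from hcentral g₀)).pow_left k
    rw [mul_assoc, hck.eq, ← mul_assoc, inv_mul_cancel, one_mul]
  have hTx : T x' = MonoidHom.id _ ⟨x' ^ (Q : Subgroup H).index,
      MonoidHom.transfer_eq_pow_aux x' key⟩ :=
    MonoidHom.transfer_eq_pow (MonoidHom.id _) x' key
  -- x' is not in the kernel of T
  have hndvd : ¬ p ∣ (Q : Subgroup H).index := Q.not_dvd_index
  have hTx_ne : T x' ≠ 1 := by
    rw [hTx]
    intro hcontra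
    have : x' ^ (Q : Subgroup H).index = 1 := by
      have := congrArg (Subtype.val) hcontra
      exact this
    have hdvd' : orderOf x' ∣ (Q : Subgroup H).index := orderOf_dvd_of_pow_eq_one this
    have : orderOf x' = p := by
      rw [← hordx]
      exact (Subgroup.orderOf_coe x').symm
    rw [this] at hdvd'
    exact hndvd hdvd'
  -- x' not in commutator of H
  have hxcomm : x' ∉ commutator H := by
    intro hmem
    exact hTx_ne (Abelianization.commutator_subset_ker T hmem)
  refine ⟨x, ⟨1, by rw [hordx, pow_one]⟩, ?_⟩
  intro hmem
  apply hxcomm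
  have hmap : (commutator H).map H.subtype = ⁅H, H⁆ := by
    rw [commutator, Subgroup.map_commutator, ← MonoidHom.range_eq_map, Subgroup.range_subtype]
  have : x ∈ (commutator H).map H.subtype := by rw [hmap]; exact hmem
  obtain ⟨y, hy, hyx⟩ := this
  have : y = x' := Subtype.ext hyx
  rwa [this] at hy
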